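/- (Subspace perturbation bound) Let A = ∑_{i=0}^{n-1} μ_i u_i u_iᵀ and B = ∑_{i=0}^{k-1} μ_i v_i v_iᵀ be symmetric matrices with orthonormal systems (u_i) and (v_i), and suppose the eigenvalue sets S_1 = {μ_k,…,μ_{n-1}} of A and S_2 = {μ_0,…,μ_{k-1}} of B are separated with dist(S_1, S_2) = δ > 0. Let P_A = ∑_{j=k}^{n-1} u_j u_jᵀ and P_B = ∑_{i=0}^{k-1} v_i v_iᵀ. Then ‖P_A P_B‖_F ≤ (1/δ)·‖P_A (A − B) P_B‖_F, where ‖·‖_F is the Frobenius norm. -/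

import Mathlib

open Matrix BigOperators

/-- Frobenius norm of a square real matrix. -/
noncomputable def frobNorm {n : ℕ} (A : Matrix (Fin n) (Fin n) ℝ) : ℝ :=
  Real.sqrt (∑ i, ∑ j, A i j ^ 2)

lemma vmv_mul {n : ℕ} (a b c d : Fin n → ℝ) :
    vecMulVec a b * vecMulVec c d = (b ⬝ᵥ c) • vecMulVec a d := by
  ext p q
  simp only [Matrix.mul_apply, vecMulVec_apply, Matrix.smul_apply, smul_eq_mul, dotProduct]
  rw [Finset.sum_mul]
  exact Finset.sum_congr rfl fun r _ => by ring

lemma key_frob {n k : ℕ} (u : Fin n → Fin n → ℝ) (v : Fin k → Fin n → ℝ)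
    (huorth : ∀ i j, (u i) ⬝ᵥ (u j) = if i = j then 1 else 0)
    (hvorth : ∀ i j, (v i) ⬝ᵥ (v j) = if i = j then 1 else 0)
    (d : Fin n → Fin k → ℝ) :
    ∑ p, ∑ q, ((∑ j, ∑ i, d j i • vecMulVec (u j) (v i)) p q) ^ 2
      = ∑ j, ∑ i, d j i ^ 2 := by
  set f : (Fin n × Fin k) → Fin n → Fin n → ℝ :=
    fun t p q => d t.1 t.2 * (u t.1 p * v t.2 q) with hf
  have hM : ∀ p q, (∑ j, ∑ i, d j i • vecMulVec (u j) (v i)) p q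
      = ∑ t : Fin n × Fin k, f t p q := by
    intro p q
    rw [Fintype.sum_prod_type]
    simp [Matrix.sum_apply, vecMulVec_apply, hf, mul_assoc]
  calc ∑ p, ∑ q, ((∑ j, ∑ i, d j i • vecMulVec (u j) (v i)) p q) ^ 2
      = ∑ pq : Fin n × Fin n, ((∑ j, ∑ i, d j i • vecMulVec (u j) (v i)) pq.1 pq.2) ^ 2 := by
        rw [← Fintype.sum_prod_type']
    _ = ∑ pq : Fin n × Fin n, ∑ ts : (Fin n × Fin k) × (Fin n × Fin k),
          f ts.1 pq.1 pq.2 * f ts.2 pq.1 pq.2 := by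
        refine Finset.sum_congr rfl fun pq _ => ?_
        rw [hM, pow_two, Finset.sum_mul_sum]
        rw [← Fintype.sum_prod_type']
    _ = ∑ ts : (Fin n × Fin k) × (Fin n × Fin k), ∑ pq : Fin n × Fin n,
          f ts.1 pq.1 pq.2 * f ts.2 pq.1 pq.2 := Finset.sum_comm
    _ = ∑ ts : (Fin n × Fin k) × (Fin n × Fin k),
          (d ts.1.1 ts.1.2 * d ts.2.1 ts.2.2) *
            ((u ts.1.1 ⬝ᵥ u ts.2.1) * (v ts.1.2 ⬝ᵥ v ts.2.2)) := by
        refine Finset.sum_congr rfl fun ts _ => ?_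
        rw [Fintype.sum_prod_type, dotProduct, dotProduct, Finset.sum_mul_sum, Finset.mul_sum]
        refine Finset.sum_congr rfl fun p _ => ?_
        rw [Finset.mul_sum]
        exact Finset.sum_congr rfl fun q _ => by simp only [hf]; ring
    _ = ∑ ts : (Fin n × Fin k) × (Fin n × Fin k),
          (if ts.1 = ts.2 then d ts.1.1 ts.1.2 * d ts.2.1 ts.2.2 else 0) := by
        refine Finset.sum_congr rfl fun ts _ => ?_
        rw [huorth, hvorth]
        by_cases h1 : ts.1.1 = ts.2.1 <;> by_cases h2 : ts.1.2 = ts.2.2 <;>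
          simp [h1, h2, Prod.ext_iff]
    _ = ∑ t : Fin n × Fin k, (d t.1 t.2) ^ 2 := by
        rw [Fintype.sum_prod_type]
        refine Finset.sum_congr rfl fun t _ => ?_
        rw [Finset.sum_ite_eq]
        simp [pow_two]
    _ = ∑ j, ∑ i, d j i ^ 2 := Fintype.sum_prod_type _

/-- Davis–Kahan / Bhatia sin-theta type subspace perturbation bound:
‖P_A P_B‖_F ≤ (1/δ)·‖P_A (A − B) P_B‖_F. -/
theorem subspace_perturbation_bound {n k : ℕ} (hkn : k ≤ n)
    (μ : Fin n → ℝ) (u : Fin n → Fin n → ℝ) (v : Fin k → Fin n → ℝ)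
    (huorth : ∀ i j, (u i) ⬝ᵥ (u j) = if i = j then 1 else 0)
    (hvorth : ∀ i j, (v i) ⬝ᵥ (v j) = if i = j then 1 else 0)
    (δ : ℝ) (hδ : 0 < δ)
    (hsep : ∀ i j : Fin n, (i : ℕ) < k → k ≤ (j : ℕ) → δ ≤ |μ i - μ j|)
    (A B PA PB : Matrix (Fin n) (Fin n) ℝ)
    (hA : A = ∑ i : Fin n, μ i • vecMulVec (u i) (u i))
    (hB : B = ∑ i : Fin k, μ (Fin.castLE hkn i) • vecMulVec (v i) (v i))
    (hPA : PA = ∑ j ∈ Finset.univ.filter (fun j : Fin n => k ≤ (j : ℕ)),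
      vecMulVec (u j) (u j))
    (hPB : PB = ∑ i : Fin k, vecMulVec (v i) (v i)) :
    frobNorm (PA * PB) ≤ (1 / δ) * frobNorm (PA * (A - B) * PB) := by
  set c : Fin n → Fin k → ℝ :=
    fun j i => if k ≤ (j : ℕ) then u j ⬝ᵥ v i else 0 with hc
  set e : Fin n → Fin k → ℝ :=
    fun j i => if k ≤ (j : ℕ) then (μ j - μ (Fin.castLE hkn i)) * (u j ⬝ᵥ v i) else 0 with he
  -- PA as a full sum
  have hPA' : PA = ∑ j : Fin n, (if k ≤ (j : ℕ) then (1:ℝ) else 0) • vecMulVec (u j) (u j) := by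
    rw [hPA, Finset.sum_filter]
    refine Finset.sum_congr rfl fun j _ => ?_
    by_cases h : k ≤ (j : ℕ) <;> simp [h]
  -- claim 1
  have h1 : PA * PB = ∑ j, ∑ i, c j i • vecMulVec (u j) (v i) := by
    rw [hPA', hPB, Finset.sum_mul]
    refine Finset.sum_congr rfl fun j _ => ?_
    rw [smul_mul_assoc, Finset.mul_sum, Finset.smul_sum]
    refine Finset.sum_congr rfl fun i _ => ?_
    rw [vmv_mul]
    by_cases h : k ≤ (j : ℕ) <;> simp [hc, h]
  -- B * PB = B
  have hBPB : B * PB = B := by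
    rw [hB, hPB, Finset.sum_mul]
    refine Finset.sum_congr rfl fun i' _ => ?_
    rw [smul_mul_assoc, Finset.mul_sum]
    rw [Finset.sum_eq_single i' (fun i _ hne => by
      rw [vmv_mul, hvorth]; simp [hne.symm]) (by simp)]
    rw [vmv_mul, hvorth]
    simp
  -- PA * A
  have hPAA : PA * A = ∑ j : Fin n, (if k ≤ (j : ℕ) then μ j else 0) • vecMulVec (u j) (u j) := by
    rw [hPA', hA, Finset.sum_mul]
    refine Finset.sum_congr rfl fun j _ => ?_
    rw [smul_mul_assoc, Finset.mul_sum]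
    rw [Finset.sum_eq_single j (fun i _ hne => by
      rw [mul_smul_comm, vmv_mul, huorth]; simp [hne.symm]) (by simp)]
    rw [mul_smul_comm, vmv_mul, huorth]
    by_cases h : k ≤ (j : ℕ) <;> simp [h, smul_smul, mul_comm]
  -- PA * A * PB
  have h2 : PA * A * PB = ∑ j : Fin n, ∑ i : Fin k,
      ((if k ≤ (j : ℕ) then μ j else 0) * (u j ⬝ᵥ v i)) • vecMulVec (u j) (v i) := by
    rw [hPAA, hPB, Finset.sum_mul]
    refine Finset.sum_congr rfl fun j _ => ?_
    rw [smul_mul_assoc, Finset.mul_sum, Finset.smul_sum]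
    refine Finset.sum_congr rfl fun i _ => ?_
    rw [vmv_mul, smul_smul]
  -- PA * B
  have h3 : PA * B = ∑ j : Fin n, ∑ i : Fin k,
      ((if k ≤ (j : ℕ) then (1:ℝ) else 0) * (μ (Fin.castLE hkn i) * (u j ⬝ᵥ v i))) •
        vecMulVec (u j) (v i) := by
    rw [hPA', hB, Finset.sum_mul]
    refine Finset.sum_congr rfl fun j _ => ?_
    rw [smul_mul_assoc, Finset.mul_sum, Finset.smul_sum]
    refine Finset.sum_congr rfl fun i _ => ?_
    rw [mul_smul_comm, vmv_mul, smul_smul, smul_smul]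
    congr 1
    ring
  -- claim 2
  have hfull : PA * (A - B) * PB = ∑ j, ∑ i, e j i • vecMulVec (u j) (v i) := by
    have : PA * (A - B) * PB = PA * A * PB - PA * B := by
      rw [mul_sub, sub_mul, mul_assoc PA B PB, hBPB]
    rw [this, h2, h3, ← Finset.sum_sub_distrib]
    refine Finset.sum_congr rfl fun j _ => ?_
    rw [← Finset.sum_sub_distrib]
    refine Finset.sum_congr rfl fun i _ => ?_
    rw [← sub_smul]
    congr 1
    by_cases h : k ≤ (j : ℕ) <;> simp [he, h] <;> ring
  -- pointwise bound
  have hpt : ∀ j i, δ ^ 2 * c j i ^ 2 ≤ e j i ^ 2 := by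
    intro j i
    by_cases h : k ≤ (j : ℕ)
    · have hd : δ ≤ |μ (Fin.castLE hkn i) - μ j| := by
        refine hsep _ j ?_ h
        simpa using i.isLt.trans_le (le_refl k) |>.trans_le (le_refl k)
      have hd2 : δ ^ 2 ≤ (μ j - μ (Fin.castLE hkn i)) ^ 2 := by
        have := abs_sub_comm (μ (Fin.castLE hkn i)) (μ j)
        calc δ ^ 2 ≤ |μ j - μ (Fin.castLE hkn i)| ^ 2 := by
              apply pow_le_pow_left₀ hδ.le
              rw [← this]; exact hd
          _ = (μ j - μ (Fin.castLE hkn i)) ^ 2 := sq_abs _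
      simp only [hc, he, if_pos h, mul_pow]
      exact mul_le_mul_of_nonneg_right hd2 (sq_nonneg _)
    · simp [hc, he, h]
  have hsum : δ ^ 2 * (∑ j, ∑ i, c j i ^ 2) ≤ ∑ j, ∑ i, e j i ^ 2 := by
    rw [Finset.mul_sum]
    refine Finset.sum_le_sum fun j _ => ?_
    rw [Finset.mul_sum]
    exact Finset.sum_le_sum fun i _ => hpt j i
  have hc2 : frobNorm (PA * PB) = Real.sqrt (∑ j, ∑ i, c j i ^ 2) := by
    rw [frobNorm, h1, key_frob u v huorth hvorth]
  have he2 : frobNorm (PA * (A - B) * PB) = Real.sqrt (∑ j, ∑ i, e j i ^ 2) := by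
    rw [frobNorm, hfull, key_frob u v huorth hvorth]
  rw [hc2, he2]
  rw [one_div, ← div_eq_inv_mul, le_div_iff₀ hδ]
  have hnn : (0:ℝ) ≤ ∑ j, ∑ i, c j i ^ 2 :=
    Finset.sum_nonneg fun j _ => Finset.sum_nonneg fun i _ => sq_nonneg _
  calc Real.sqrt (∑ j, ∑ i, c j i ^ 2) * δ
      = Real.sqrt (δ ^ 2 * (∑ j, ∑ i, c j i ^ 2)) := by
        rw [Real.sqrt_mul (sq_nonneg δ), Real.sqrt_sq hδ.le, mul_comm]
    _ ≤ Real.sqrt (∑ j, ∑ i, e j i ^ 2) := Real.sqrt_le_sqrt hsum
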